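/- Let d ≥ 2 be an integer, let D be a finite set with |D| ≥ 4·C(d,2), and let F be a function assigning to every d-element subset T of D a non-empty collection F(T) of 2-element subsets of T. If x1, ..., xd are sampled independently and uniformly at random from D, then the probability that x1, ..., xd are pairwise distinct and {x1, x2} ∈ F({x1, ..., xd}) is at least 1/(2·C(d,2)) = 1/(d(d−1)). -/

import Mathlib

open Finset

lemma aux_pow_desc (N : ℕ) : ∀ k : ℕ, N ^ k ≤ N.descFactorial k + k.choose 2 * N ^ (k - 1)
  | 0 => by simp
  | 1 => by simp
  | (m+2) => by
    show N ^ (m+2) ≤ N.descFactorial (m+2) + (m+2).choose 2 * N ^ (m+1)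
    have ih := aux_pow_desc N (m+1)
    have h0 : N.descFactorial (m+1) * N ≤
        N.descFactorial (m+2) + N.descFactorial (m+1) * (m+1) := by
      rcases le_or_gt (m+1) N with h | h
      · have hsplit : N.descFactorial (m+1) * N =
            N.descFactorial (m+1) * (N - (m+1)) + N.descFactorial (m+1) * (m+1) := by
          rw [← Nat.mul_add]; congr 1; omega
        have h4 : N.descFactorial (m+1) * (N - (m+1)) = N.descFactorial (m+2) :=
          ((Nat.descFactorial_succ N (m+1)).trans (Nat.mul_comm _ _)).symm
        omega
      · rw [Nat.descFactorial_eq_zero_iff_lt.mpr h]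
        simp
    have hd1 : N.descFactorial (m+1) ≤ N ^ (m+1) := Nat.descFactorial_le_pow N (m+1)
    have hch : (m+2).choose 2 = (m+1) + (m+1).choose 2 := by
      rw [Nat.choose_succ_succ]
      simp [Nat.choose_one_right]
    have hpow : N ^ (m+2) = N ^ (m+1) * N := by ring
    have hstep : N ^ (m+1) * N ≤ (N.descFactorial (m+1) + (m+1).choose 2 * N ^ m) * N :=
      Nat.mul_le_mul_right N (by simpa using ih)
    have hexp : ((m+1).choose 2 * N ^ m) * N = (m+1).choose 2 * N ^ (m+1) := by ring
    calc N ^ (m+2) = N ^ (m+1) * N := hpow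
      _ ≤ (N.descFactorial (m+1) + (m+1).choose 2 * N ^ m) * N := hstep
      _ = N.descFactorial (m+1) * N + (m+1).choose 2 * N ^ (m+1) := by rw [Nat.add_mul, hexp]
      _ ≤ (N.descFactorial (m+2) + N.descFactorial (m+1) * (m+1)) + (m+1).choose 2 * N ^ (m+1) := by
          omega
      _ ≤ (N.descFactorial (m+2) + N ^ (m+1) * (m+1)) + (m+1).choose 2 * N ^ (m+1) := by
          have := Nat.mul_le_mul_right (m+1) hd1; omega
      _ = N.descFactorial (m+2) + (m+2).choose 2 * N ^ (m+1) := by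
          rw [hch]; ring
lemma exists_perm_01 {d : ℕ} (hd : 2 ≤ d) (i j : Fin d) (hij : i ≠ j) :
    ∃ σ : Equiv.Perm (Fin d), σ ⟨0, by omega⟩ = i ∧ σ ⟨1, by omega⟩ = j := by
  set z0 : Fin d := ⟨0, by omega⟩ with hz0
  set z1 : Fin d := ⟨1, by omega⟩ with hz1
  set τ : Equiv.Perm (Fin d) := Equiv.swap z0 i with hτ
  refine ⟨(Equiv.swap z1 (τ.symm j)).trans τ, ?_, ?_⟩
  · have h1 : z0 ≠ z1 := by simp [hz0, hz1, Fin.ext_iff]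
    have h2 : z0 ≠ τ.symm j := by
      intro h
      apply hij
      have h3 := congrArg τ h
      rw [Equiv.apply_symm_apply] at h3
      rw [← h3, hτ, Equiv.swap_apply_left]
    simp only [Equiv.trans_apply, Equiv.swap_apply_of_ne_of_ne h1 h2]
    rw [hτ, Equiv.swap_apply_left]
  · simp only [Equiv.trans_apply, Equiv.swap_apply_left, Equiv.apply_symm_apply]

/-- Let `d ≥ 2`, let `D` be a finite set with `|D| ≥ 4·C(d,2)`, and let `F`
assign to every `d`-element subset `T` of `D` a non-empty collection of
`2`-element subsets of `T`.  For `x₁, …, x_d` sampled independently and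
uniformly from `D` (uniform product measure on `D^d`, expressed by counting),
the probability that `x₁, …, x_d` are pairwise distinct and
`{x₁, x₂} ∈ F({x₁, …, x_d})` is at least `1/(2·C(d,2)) = 1/(d(d-1))`. -/
theorem stmt_11 {D : Type*} [Fintype D] [DecidableEq D] (d : ℕ) (hd : 2 ≤ d)
    (hD : 4 * d.choose 2 ≤ Fintype.card D)
    (F : Finset D → Finset (Finset D))
    (hF : ∀ T : Finset D, T.card = d →
      (F T).Nonempty ∧ ∀ P ∈ F T, P ⊆ T ∧ P.card = 2) :
    (1 : ℝ) / (2 * d.choose 2) ≤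
      ((univ.filter fun x : Fin d → D => Function.Injective x ∧
          ({x ⟨0, by omega⟩, x ⟨1, by omega⟩} : Finset D) ∈
            F (Finset.image x univ)).card : ℝ) /
        ((Fintype.card D : ℝ) ^ d) := by
  classical
  have hC : 0 < d.choose 2 := Nat.choose_pos hd
  have hN : 0 < Fintype.card D := by omega
  have main : ∀ (hh0 : 0 < d) (hh1 : 1 < d),
      (Fintype.card D) ^ d ≤ (univ.filter fun x : Fin d → D => Function.Injective x ∧
          ({x ⟨0, hh0⟩, x ⟨1, hh1⟩} : Finset D) ∈ F (Finset.image x univ)).card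
        * (2 * d.choose 2) := by
    intro hh0 hh1
    set N := Fintype.card D with hNdef
    set x0 : Fin d := ⟨0, hh0⟩ with hx0
    set x1 : Fin d := ⟨1, hh1⟩ with hx1
    set P : Finset D → Finset D := fun T => if h : (F T).Nonempty then h.choose else ∅ with hPdef
    have hPmem : ∀ T : Finset D, T.card = d → P T ∈ F T := by
      intro T hT
      have hne := (hF T hT).1
      simp only [hPdef, dif_pos hne]
      exact hne.choose_spec
    -- choice of permutation
    have hσexists : ∀ i j : Fin d, i ≠ j →
        ∃ σ : Equiv.Perm (Fin d), σ x0 = i ∧ σ x1 = j := fun i j h =>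
      exists_perm_01 hd i j h
    set σc : Fin d → Fin d → Equiv.Perm (Fin d) :=
      fun i j => if h : i ≠ j then (hσexists i j h).choose else 1 with hσcdef
    have hσc : ∀ (i j : Fin d) (h : i ≠ j), σc i j x0 = i ∧ σc i j x1 = j := by
      intro i j h
      simp only [hσcdef, dif_pos h]
      exact (hσexists i j h).choose_spec
    set σQ : Finset (Fin d) → Equiv.Perm (Fin d) :=
      fun Q => if h : Q.Nonempty then σc (Q.min' h) (Q.max' h) else 1 with hσQdef
    set Q : (Fin d → D) → Finset (Fin d) :=
      fun x => univ.filter (fun i => x i ∈ P (Finset.image x univ)) with hQdef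
    set f : (Fin d → D) → (Fin d → D) × Finset (Fin d) :=
      fun x => (x ∘ (σQ (Q x)), Q x) with hfdef
    set E : Finset (Fin d → D) := univ.filter (fun x => Function.Injective x) with hEdef
    set Good : Finset (Fin d → D) := univ.filter
      (fun x => Function.Injective x ∧
        ({x x0, x x1} : Finset D) = P (Finset.image x univ)) with hGooddef
    set S : Finset (Fin d → D) := univ.filter
      (fun x => Function.Injective x ∧
        ({x x0, x x1} : Finset D) ∈ F (Finset.image x univ)) with hSdef
    -- basic facts for injective x
    have hTcard : ∀ x : Fin d → D, Function.Injective x →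
        (Finset.image x univ).card = d := by
      intro x hx
      rw [Finset.card_image_of_injective univ hx, card_univ, Fintype.card_fin]
    have hQfacts : ∀ x : Fin d → D, Function.Injective x → (Q x).card = 2 := by
      intro x hx
      have hT := hTcard x hx
      obtain ⟨hPsub, hP2⟩ := (hF _ hT).2 _ (hPmem _ hT)
      have himg : Finset.image x (Q x) = P (Finset.image x univ) := by
        ext p
        constructor
        · intro hp
          obtain ⟨i, hi, rfl⟩ := Finset.mem_image.mp hp
          exact (Finset.mem_filter.mp hi).2
        · intro hp
          obtain ⟨i, _, rfl⟩ := Finset.mem_image.mp (hPsub hp)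
          exact Finset.mem_image.mpr ⟨i, Finset.mem_filter.mpr ⟨Finset.mem_univ i, hp⟩, rfl⟩
      calc (Q x).card = (Finset.image x (Q x)).card :=
            (Finset.card_image_of_injective _ hx).symm
        _ = 2 := by rw [himg]; exact hP2
    -- f maps E into Good ×ˢ powersetCard 2 univ
    have hmaps : ∀ x ∈ E, f x ∈ Good ×ˢ Finset.powersetCard 2 (univ : Finset (Fin d)) := by
      intro x hxE
      have hx : Function.Injective x := (Finset.mem_filter.mp hxE).2
      have hT := hTcard x hx
      obtain ⟨hPsub, hP2⟩ := (hF _ hT).2 _ (hPmem _ hT)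
      have hQ2 := hQfacts x hx
      have hQne : (Q x).Nonempty := Finset.card_pos.mp (by omega)
      set i := (Q x).min' hQne with hidef
      set j := (Q x).max' hQne with hjdef
      have hij : i < j := Finset.min'_lt_max'_of_card _ (by omega)
      have hσ : σQ (Q x) = σc i j := by rw [hσQdef]; simp [dif_pos hQne]; rfl
      obtain ⟨hσ0, hσ1⟩ := hσc i j hij.ne
      have hiQ : i ∈ Q x := Finset.min'_mem _ _
      have hjQ : j ∈ Q x := Finset.max'_mem _ _
      have hxiP : x i ∈ P (Finset.image x univ) := (Finset.mem_filter.mp hiQ).2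
      have hxjP : x j ∈ P (Finset.image x univ) := (Finset.mem_filter.mp hjQ).2
      have hxij : x i ≠ x j := fun h => hij.ne (hx h)
      -- the composed function
      set y : Fin d → D := x ∘ (σQ (Q x)) with hydef
      have hyinj : Function.Injective y := hx.comp (σQ (Q x)).injective
      have hyimg : Finset.image y univ = Finset.image x univ := by
        rw [hydef, ← Finset.image_image, Finset.image_univ_of_surjective (σQ (Q x)).surjective]
      have hy0 : y x0 = x i := by rw [hydef]; simp [hσ, hσ0]
      have hy1 : y x1 = x j := by rw [hydef]; simp [hσ, hσ1]
      have hpair : ({y x0, y x1} : Finset D) = P (Finset.image y univ) := by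
        rw [hy0, hy1, hyimg]
        apply Finset.eq_of_subset_of_card_le
        · intro p hp
          simp only [Finset.mem_insert, Finset.mem_singleton] at hp
          rcases hp with rfl | rfl
          · exact hxiP
          · exact hxjP
        · rw [hP2, Finset.card_pair hxij]
      refine Finset.mem_product.mpr ⟨?_, ?_⟩
      · exact Finset.mem_filter.mpr ⟨Finset.mem_univ _, hyinj, hpair⟩
      · exact Finset.mem_powersetCard.mpr ⟨Finset.subset_univ _, hQ2⟩
    have hinj : Set.InjOn f E := by
      intro x hxE x' hx'E hfx
      have hQeq : Q x = Q x' := congrArg Prod.snd hfx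
      have hcomp : x ∘ (σQ (Q x)) = x' ∘ (σQ (Q x')) := congrArg Prod.fst hfx
      rw [hQeq] at hcomp
      funext k
      have := congrFun hcomp ((σQ (Q x')).symm k)
      simpa using this
    have hcard1 : E.card ≤ Good.card * d.choose 2 := by
      have := Finset.card_le_card_of_injOn f hmaps hinj
      rwa [Finset.card_product, Finset.card_powersetCard, card_univ, Fintype.card_fin] at this
    have hGS : Good ⊆ S := by
      intro x hx
      obtain ⟨hu, hxinj, hpair⟩ := Finset.mem_filter.mp hx
      exact Finset.mem_filter.mpr ⟨hu, hxinj,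
        hpair ▸ hPmem _ (hTcard x hxinj)⟩
    have hcard2 : Good.card ≤ S.card := Finset.card_le_card hGS
    -- E.card = descFactorial
    have hE : E.card = N.descFactorial d := by
      rw [hEdef, ← Fintype.card_subtype]
      rw [Fintype.card_congr (Equiv.subtypeInjectiveEquivEmbedding (Fin d) D)]
      rw [Fintype.card_embedding_eq, Fintype.card_fin]
    -- N^d ≤ 2 * desc
    have hpow2 : N ^ d ≤ 2 * N.descFactorial d := by
      have h1 := aux_pow_desc N d
      have h2 : 4 * (d.choose 2 * N ^ (d-1)) ≤ N ^ d := by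
        calc 4 * (d.choose 2 * N ^ (d-1)) = (4 * d.choose 2) * N ^ (d-1) := by ring
          _ ≤ N * N ^ (d-1) := Nat.mul_le_mul_right _ hD
          _ = N ^ d := by
              rw [← pow_succ']
              congr 1
              omega
      omega
    calc N ^ d ≤ 2 * N.descFactorial d := hpow2
      _ = 2 * E.card := by rw [hE]
      _ ≤ 2 * (Good.card * d.choose 2) := by omega
      _ ≤ 2 * (S.card * d.choose 2) := by
          have := Nat.mul_le_mul_right (d.choose 2) hcard2; omega
      _ = S.card * (2 * d.choose 2) := by ring
  have key := main (by omega) (by omega)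
  rw [div_le_div_iff₀ (by positivity) (by positivity), one_mul]
  exact_mod_cast key
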